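/- If the matrix [E B] : Matrix (Fin n) (Fin (n+m)) ℂ has rank less than n, then the block Toeplitz matrix 𝒞(E,A,B) of Theorem 5 (with block rows stacking the pattern (−A, B; E, 0) shifted along the block columns, ending with a final column block containing B) does not have full row rank n². Equivalently: a nonzero left null vector v of [E B] yields a nonzero left null vector of 𝒞(E,A,B) supported on the last block row. -/

import Mathlib

open Matrix

lemma aux_exists_vecMul_eq_zero {k l : Type*} [Fintype k] [Fintype l] [DecidableEq k]
    (M : Matrix k l ℂ) (h : M.rank < Fintype.card k) :
    ∃ v : k → ℂ, v ≠ 0 ∧ Matrix.vecMul v M = 0 := by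
  have h1 : Mᵀ.rank < Fintype.card k := by rwa [Matrix.rank_transpose]
  have h2 := LinearMap.finrank_range_add_finrank_ker (Mᵀ.mulVecLin)
  rw [Module.finrank_fintype_fun_eq_card] at h2
  have hker : LinearMap.ker Mᵀ.mulVecLin ≠ ⊥ := by
    intro hk
    rw [hk, finrank_bot] at h2
    exact absurd h2 (by have := h1; unfold Matrix.rank at this; omega)
  obtain ⟨v, hv, hv0⟩ := Submodule.exists_mem_ne_zero_of_ne_bot hker
  exact ⟨v, hv0, by rw [← Matrix.mulVec_transpose]; exact hv⟩

lemma aux_rank_lt_of_vecMul {k l : Type*} [Fintype k] [Fintype l] [DecidableEq k]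
    (M : Matrix k l ℂ) (w : k → ℂ) (hw : w ≠ 0) (hwM : Matrix.vecMul w M = 0) :
    M.rank < Fintype.card k := by
  have h2 := LinearMap.finrank_range_add_finrank_ker (Mᵀ.mulVecLin)
  rw [Module.finrank_fintype_fun_eq_card] at h2
  have hker : LinearMap.ker Mᵀ.mulVecLin ≠ ⊥ := by
    intro hk
    have : w ∈ LinearMap.ker Mᵀ.mulVecLin := by
      simp [LinearMap.mem_ker, Matrix.mulVecLin_apply, Matrix.mulVec_transpose, hwM]
    rw [hk, Submodule.mem_bot] at this
    exact hw this
  have : 0 < Module.finrank ℂ (LinearMap.ker Mᵀ.mulVecLin) := by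
    rcases Nat.eq_zero_or_pos (Module.finrank ℂ (LinearMap.ker Mᵀ.mulVecLin)) with h0 | h0
    · exact absurd (Submodule.finrank_eq_zero.mp h0) hker
    · exact h0
  have : Mᵀ.rank < Fintype.card k := by unfold Matrix.rank; omega
  rwa [Matrix.rank_transpose] at this

/-- If `[E B]` has rank `< n`, then the block Toeplitz controllability matrix
`𝒞(E,A,B)` is not of full row rank `n²`; indeed there is a nonzero left null
vector supported on the last block row. -/
theorem toeplitz_rank_deficient_of_EB_rank_deficient (n m : ℕ)
    (E A : Matrix (Fin n) (Fin n) ℂ) (B : Matrix (Fin n) (Fin m) ℂ)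
    (C : Matrix (Fin n × Fin n) ((Fin (n - 1) × (Fin n ⊕ Fin m)) ⊕ Fin m) ℂ)
    (hC₁ : ∀ (i a : Fin n) (j : Fin (n - 1)) (b : Fin n),
      C (i, a) (Sum.inl (j, Sum.inl b)) =
        if (i : ℕ) = (j : ℕ) then -A a b
        else if (i : ℕ) = (j : ℕ) + 1 then E a b else 0)
    (hC₂ : ∀ (i a : Fin n) (j : Fin (n - 1)) (c : Fin m),
      C (i, a) (Sum.inl (j, Sum.inr c)) = if (i : ℕ) = (j : ℕ) then B a c else 0)
    (hC₃ : ∀ (i a : Fin n) (c : Fin m),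
      C (i, a) (Sum.inr c) = if (i : ℕ) = n - 1 then B a c else 0)
    (h : (Matrix.fromCols E B).rank < n) :
    C.rank ≠ n * n ∧
      ∃ w : Fin n × Fin n → ℂ, w ≠ 0 ∧ Matrix.vecMul w C = 0 ∧
        ∀ p : Fin n × Fin n, (p.1 : ℕ) ≠ n - 1 → w p = 0 := by
  have hn : 0 < n := lt_of_le_of_lt (Nat.zero_le _) h
  obtain ⟨v, hv0, hv⟩ := aux_exists_vecMul_eq_zero (Matrix.fromCols E B)
    (by simpa using h)
  have hvE : ∀ b : Fin n, ∑ a, v a * E a b = 0 := fun b => by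
    have := congrFun hv (Sum.inl b)
    simpa [Matrix.vecMul, dotProduct, Matrix.fromCols] using this
  have hvB : ∀ c : Fin m, ∑ a, v a * B a c = 0 := fun c => by
    have := congrFun hv (Sum.inr c)
    simpa [Matrix.vecMul, dotProduct, Matrix.fromCols] using this
  set last : Fin n := ⟨n - 1, Nat.sub_lt hn one_pos⟩ with hlast
  set w : Fin n × Fin n → ℂ := fun p => if p.1 = last then v p.2 else 0 with hwdef
  have hwlast : ∀ a : Fin n, w (last, a) = v a := fun a => by simp [hwdef]
  have hw0 : w ≠ 0 := by
    obtain ⟨a, ha⟩ := Function.ne_iff.mp hv0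
    intro hw
    apply ha
    have := congrFun hw (last, a)
    simpa [hwdef] using this
  have hwC : Matrix.vecMul w C = 0 := by
    funext col
    have hsum : Matrix.vecMul w C col = ∑ a, v a * C (last, a) col := by
      simp only [Matrix.vecMul, dotProduct, Fintype.sum_prod_type, hwdef]
      rw [Finset.sum_comm]
      simp [ite_mul, Finset.sum_ite_eq']
    rcases col with ⟨j, bc⟩ | c
    · have hj : (j : ℕ) < n - 1 := j.2
      rcases bc with b | c
      · rw [hsum]
        simp only [hC₁, hlast, Fin.val_mk]
        have h1 : ¬ (n - 1 = (j : ℕ)) := by omega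
        simp only [h1, if_false]
        by_cases h2 : n - 1 = (j : ℕ) + 1
        · simp only [if_pos h2]
          simpa using hvE b
        · simp only [if_neg h2, mul_zero, Finset.sum_const_zero, Pi.zero_apply]
      · rw [hsum]
        simp only [hC₂]
        have h1 : ¬ (n - 1 = (j : ℕ)) := by omega
        simp [h1, hlast]
    · rw [hsum]
      simp only [hC₃, hlast, Fin.val_mk, if_pos rfl]
      simpa using hvB c
  refine ⟨?_, w, hw0, hwC, ?_⟩
  · have := aux_rank_lt_of_vecMul C w hw0 hwC
    simp only [Fintype.card_prod, Fintype.card_fin] at this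
    omega
  · intro p hp
    have : p.1 ≠ last := by
      intro he; apply hp; rw [he]
    simp [hwdef, this]
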